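/- Let G be a finite non-Abelian group. Then every connected component of the commuting graph Γ_G is a complete graph (i.e., Γ_G is a disjoint union of complete graphs) if and only if G is an AC-group. -/

import Mathlib

open scoped Classical

/-- The commuting graph of a group `G`: its vertices are the non-central
elements of `G`, and two distinct vertices are adjacent iff they commute. -/
noncomputable def commGraph (G : Type*) [Group G] :
    SimpleGraph {g : G // g ∉ Subgroup.center G} where
  Adj x y := x ≠ y ∧ (x : G) * y = (y : G) * x
  symm := ⟨fun _ _ h => ⟨h.1.symm, h.2.symm⟩⟩
  loopless := ⟨fun _ h => h.1 rfl⟩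

lemma adjMatrix_isHermitian {V : Type*} [Fintype V] (Γ : SimpleGraph V) :
    (Γ.adjMatrix ℝ).IsHermitian := by
  ext i j
  simp [Matrix.conjTranspose_apply, SimpleGraph.adj_comm]

/-- The energy of a finite graph: the sum of the absolute values of the
eigenvalues of its adjacency matrix. -/
noncomputable def graphEnergy {V : Type*} [Fintype V] (Γ : SimpleGraph V) : ℝ :=
  ∑ i, |(adjMatrix_isHermitian Γ).eigenvalues i|

/-- `G` is an AC-group: the centralizer of every non-central element is Abelian. -/
def IsACGroup (G : Type*) [Group G] : Prop :=
  ∀ x : G, x ∉ Subgroup.center G →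
    ∀ y ∈ Subgroup.centralizer ({x} : Set G), ∀ z ∈ Subgroup.centralizer ({x} : Set G),
      y * z = z * y

/-- The commuting graph of a finite non-Abelian group is a disjoint union of complete
graphs (i.e. every connected component is complete) iff `G` is an AC-group. -/
theorem commGraph_components_complete_iff_isACGroup
    (G : Type*) [Group G] [Fintype G] (hna : ∃ x y : G, x * y ≠ y * x) :
    (∀ x y : {g : G // g ∉ Subgroup.center G},
        (commGraph G).Reachable x y → x = y ∨ (commGraph G).Adj x y) ↔ IsACGroup G := by
  constructor
  · intro h x hx y hy z hz
    have hxy : x * y = y * x := Subgroup.mem_centralizer_iff.mp hy x (Set.mem_singleton x)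
    have hxz : x * z = z * x := Subgroup.mem_centralizer_iff.mp hz x (Set.mem_singleton x)
    by_cases hyc : y ∈ Subgroup.center G
    · exact ((Subgroup.mem_center_iff.mp hyc) z).symm
    by_cases hzc : z ∈ Subgroup.center G
    · exact (Subgroup.mem_center_iff.mp hzc) y
    by_cases hyz : y = z
    · rw [hyz]
    have r1 : (commGraph G).Reachable ⟨y, hyc⟩ ⟨x, hx⟩ := by
      by_cases hyx : y = x
      · subst hyx; exact SimpleGraph.Reachable.refl _
      · exact SimpleGraph.Adj.reachable ⟨by simpa using hyx, hxy.symm⟩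
    have r2 : (commGraph G).Reachable ⟨x, hx⟩ ⟨z, hzc⟩ := by
      by_cases hxz' : x = z
      · subst hxz'; exact SimpleGraph.Reachable.refl _
      · exact SimpleGraph.Adj.reachable ⟨by simpa using hxz', hxz⟩
    rcases h _ _ (r1.trans r2) with he | ha
    · exact absurd (congrArg Subtype.val he) hyz
    · exact ha.2
  · intro hac x y hr
    obtain ⟨w⟩ := hr
    induction w with
    | nil => exact Or.inl rfl
    | @cons u v z ha w ih =>
      rcases ih with rfl | hb
      · exact Or.inr ha
      · by_cases huz : u = z
        · exact Or.inl huz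
        · refine Or.inr ⟨huz, ?_⟩
          refine hac v v.2 u (Subgroup.mem_centralizer_iff.mpr ?_) z
            (Subgroup.mem_centralizer_iff.mpr ?_)
          · intro g hg; rw [Set.mem_singleton_iff] at hg; subst hg; exact ha.2.symm
          · intro g hg; rw [Set.mem_singleton_iff] at hg; subst hg; exact hb.2
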